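/- (Kraft–Chaitin) Let f : ℕ → ℕ be a total recursive function with ∑_{n=0}^∞ 2^{−f(n)} ≤ 1. Then there exists a total recursive injection g : ℕ → {0,1}* such that the range of g is prefix-free and |g(n)| = f(n) for all n. -/

import Mathlib

/-- A set of binary strings is prefix-free if no member is a proper prefix of another. -/
def PrefixFreeSet (S : Set (List Bool)) : Prop :=
  ∀ p ∈ S, ∀ q ∈ S, p <+: q → p = q

namespace KraftChaitin

abbrev Node := List Bool

/-- Incomparability of strings: neither is a prefix of the other. -/
def Incomp (u v : Node) : Prop := ¬ u <+: v ∧ ¬ v <+: u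

theorem Incomp.symm {u v : Node} (h : Incomp u v) : Incomp v u := ⟨h.2, h.1⟩

theorem incomp_symmetric : Symmetric Incomp := fun _ _ h => h.symm

/-- pick the longer of two strings -/
def fold1 (a b : Node) : Node := if a.length ≤ b.length then b else a

/-- pick a longest string of length ≤ ℓ from the free list -/
def pick (ℓ : ℕ) (L : List Node) : Node :=
  (L.filter (fun y => y.length ≤ ℓ)).foldl fold1 []

/-- extend a string to length ℓ with `false`s -/
def ext (ℓ : ℕ) (x : Node) : Node := x ++ List.replicate (ℓ - x.length) false

/-- the new free nodes produced when allocating `ext ℓ x` out of free node `x` -/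
def split (ℓ : ℕ) (x : Node) : List Node :=
  (List.range (ℓ - x.length)).map (fun i => x ++ (List.replicate i false ++ [true]))

/-- one step of the Kraft-Chaitin algorithm: the new free list -/
def nextFree (ℓ : ℕ) (L : List Node) : List Node :=
  L.filter (fun y => y.length ≠ (pick ℓ L).length) ++ split ℓ (pick ℓ L)

/-- the free list after n steps -/
def S (f : ℕ → ℕ) : ℕ → List Node
  | 0 => [[]]
  | n + 1 => nextFree (f n) (S f n)

/-- the code word assigned to request n -/
def G (f : ℕ → ℕ) (n : ℕ) : Node := ext (f n) (pick (f n) (S f n))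

/-! ### basic properties of pick -/

theorem foldl_length_le {ℓ : ℕ} : ∀ (l : List Node) (a : Node), a.length ≤ ℓ →
    (∀ b ∈ l, b.length ≤ ℓ) → (l.foldl fold1 a).length ≤ ℓ
  | [], a, ha, _ => ha
  | b :: t, a, ha, hl => by
    have : (fold1 a b).length ≤ ℓ := by
      unfold fold1; split <;> [exact hl b (by simp); exact ha]
    exact foldl_length_le t _ this (fun c hc => hl c (by simp [hc]))

theorem foldl_mem : ∀ (l : List Node) (a : Node), l.foldl fold1 a = a ∨ l.foldl fold1 a ∈ l
  | [], a => Or.inl rfl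
  | b :: t, a => by
    have h := foldl_mem t (fold1 a b)
    rcases h with h | h
    · rw [List.foldl_cons, h]
      unfold fold1; split
      · exact Or.inr (by simp)
      · exact Or.inl rfl
    · exact Or.inr (by simp [List.foldl_cons, h])

theorem foldl_le_length : ∀ (l : List Node) (a : Node),
    a.length ≤ (l.foldl fold1 a).length ∧ ∀ b ∈ l, b.length ≤ (l.foldl fold1 a).length
  | [], a => ⟨le_refl _, by simp⟩
  | b :: t, a => by
    obtain ⟨h1, h2⟩ := foldl_le_length t (fold1 a b)
    have hab : a.length ≤ (fold1 a b).length ∧ b.length ≤ (fold1 a b).length := by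
      unfold fold1; split <;> omega
    constructor
    · exact le_trans hab.1 h1
    · intro c hc
      rcases List.mem_cons.1 hc with rfl | hc
      · exact le_trans hab.2 h1
      · exact h2 c hc

theorem pick_length_le (ℓ : ℕ) (L : List Node) : (pick ℓ L).length ≤ ℓ := by
  apply foldl_length_le
  · simp
  · intro b hb
    simpa using (List.mem_filter.1 hb).2

theorem pick_mem {ℓ : ℕ} {L : List Node} (h : ∃ y ∈ L, y.length ≤ ℓ) : pick ℓ L ∈ L := by
  obtain ⟨y, hy, hyl⟩ := h
  have hyf : y ∈ L.filter (fun y => y.length ≤ ℓ) := List.mem_filter.2 ⟨hy, by simpa⟩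
  unfold pick
  cases hfe : L.filter (fun y => y.length ≤ ℓ) with
  | nil => rw [hfe] at hyf; simp at hyf
  | cons b t =>
    rw [List.foldl_cons]
    have hb : fold1 [] b = b := by simp [fold1]
    rw [hb]
    have hmem : t.foldl fold1 b ∈ b :: t := by
      rcases foldl_mem t b with h | h
      · rw [h]; exact List.mem_cons_self
      · exact List.mem_cons_of_mem b h
    rw [← hfe] at hmem
    exact (List.mem_filter.1 hmem).1

theorem pick_max {ℓ : ℕ} {L : List Node} {y : Node} (hy : y ∈ L) (hyl : y.length ≤ ℓ) :
    y.length ≤ (pick ℓ L).length := by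
  have hyf : y ∈ L.filter (fun y => y.length ≤ ℓ) := List.mem_filter.2 ⟨hy, by simpa⟩
  exact (foldl_le_length _ []).2 y hyf


/-! ### incomparability lemmas -/

theorem incomp_of_getElem {u v : Node} {k : ℕ} (hku : k < u.length) (hkv : k < v.length)
    (h : u[k] ≠ v[k]) : Incomp u v := by
  constructor
  · intro hp; exact h (hp.getElem hku)
  · intro hp; exact h (hp.getElem hkv).symm

theorem length_ext {ℓ : ℕ} {x : Node} (h : x.length ≤ ℓ) : (ext ℓ x).length = ℓ := by
  simp [ext]; omega

theorem prefix_ext (ℓ : ℕ) (x : Node) : x <+: ext ℓ x := ⟨_, rfl⟩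

theorem mem_split {ℓ : ℕ} {x z : Node} :
    z ∈ split ℓ x ↔ ∃ i < ℓ - x.length, z = x ++ (List.replicate i false ++ [true]) := by
  simp [split, eq_comm]

theorem prefix_of_mem_split {ℓ : ℕ} {x z : Node} (h : z ∈ split ℓ x) : x <+: z := by
  obtain ⟨i, _, rfl⟩ := mem_split.1 h
  exact ⟨_, rfl⟩

theorem length_of_mem_split {ℓ : ℕ} {x z : Node} (h : z ∈ split ℓ x) :
    ∃ i < ℓ - x.length, z.length = x.length + i + 1 := by
  obtain ⟨i, hi, rfl⟩ := mem_split.1 h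
  exact ⟨i, hi, by simp; omega⟩

/-- `x ++ (replicate i false ++ [true])` at index `x.length + i` is `true`. -/
theorem getElem_splitElt (x : Node) (i : ℕ)
    (h : x.length + i < (x ++ (List.replicate i false ++ [true])).length) :
    (x ++ (List.replicate i false ++ [true]))[x.length + i] = true := by
  rw [List.getElem_append_right (by simp)]
  simp

/-- indexes below `i` give `false`. -/
theorem getElem_splitElt_lt (x : Node) (i j : ℕ) (hj : j < i)
    (h : x.length + j < (x ++ (List.replicate i false ++ [true])).length) :
    (x ++ (List.replicate i false ++ [true]))[x.length + j] = false := by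
  rw [List.getElem_append_right (by simp)]
  rw [List.getElem_append_left (by simpa using by omega)]
  simp

theorem getElem_ext (x : Node) (d j : ℕ) (hj : j < d)
    (h : x.length + j < (x ++ List.replicate d false).length) :
    (x ++ List.replicate d false)[x.length + j] = false := by
  rw [List.getElem_append_right (by simp)]
  simp

theorem incomp_split_split {ℓ : ℕ} {x z₁ z₂ : Node} (h₁ : z₁ ∈ split ℓ x) (h₂ : z₂ ∈ split ℓ x)
    (hne : z₁ ≠ z₂) : Incomp z₁ z₂ := by
  obtain ⟨i, hi, rfl⟩ := mem_split.1 h₁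
  obtain ⟨j, hj, rfl⟩ := mem_split.1 h₂
  have hij : i ≠ j := fun h => hne (by rw [h])
  rcases Nat.lt_or_ge i j with h | h
  · refine incomp_of_getElem (k := x.length + i) (by simp) (by simp; omega) ?_
    rw [getElem_splitElt, getElem_splitElt_lt x j i h]
    simp
  · have h' : j < i := by omega
    refine incomp_of_getElem (k := x.length + j) (by simp; omega) (by simp) ?_
    rw [getElem_splitElt_lt x i j h', getElem_splitElt]
    simp

theorem incomp_ext_split {ℓ : ℕ} {x z : Node} (hx : x.length ≤ ℓ) (hz : z ∈ split ℓ x) :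
    Incomp (ext ℓ x) z := by
  obtain ⟨i, hi, rfl⟩ := mem_split.1 hz
  refine incomp_of_getElem (k := x.length + i) (by simp [ext]; omega) (by simp) ?_
  unfold ext
  rw [getElem_ext x _ i hi, getElem_splitElt]
  simp

/-- If `y` is incomparable with `x` and `x` is a prefix of `z`, then `y` is incomparable
with `z`. -/
theorem Incomp.of_prefix {x y z : Node} (h : Incomp y x) (hxz : x <+: z) : Incomp y z := by
  constructor
  · intro hyz
    rcases List.prefix_or_prefix_of_prefix hyz hxz with h' | h'
    · exact h.1 h'
    · exact h.2 h'
  · intro hzy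
    exact h.2 (hxz.trans hzy)

/-! ### mass -/

/-- weight of a node -/
noncomputable def wt (x : Node) : ℝ := (2 : ℝ) ^ (-(x.length : ℤ))

noncomputable def mass (L : List Node) : ℝ := (L.map wt).sum

theorem wt_pos (x : Node) : 0 < wt x := zpow_pos two_pos _

theorem mass_nonneg (L : List Node) : 0 ≤ mass L := by
  apply List.sum_nonneg
  intro a ha
  obtain ⟨x, _, rfl⟩ := List.mem_map.1 ha
  exact (wt_pos x).le

theorem mass_append (A B : List Node) : mass (A ++ B) = mass A + mass B := by
  simp [mass]

theorem geom_Ico (a d : ℕ) :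
    ∑ j ∈ Finset.Ico a (a + d), (2 : ℝ) ^ (-(j : ℤ)) =
      2 ^ (1 - (a : ℤ)) - 2 ^ (1 - (a : ℤ) - (d : ℤ)) := by
  induction d with
  | zero => simp
  | succ d ih =>
    rw [show a + (d + 1) = (a + d) + 1 from rfl,
      Finset.sum_Ico_succ_top (Nat.le_add_right a d), ih]
    have h2 : (2 : ℝ) ≠ 0 := two_ne_zero
    have e1 : (1 : ℤ) - a - d = (-((a : ℤ) + d)) + 1 := by ring
    have e2 : (1 : ℤ) - a - (d + 1 : ℕ) = -((a : ℤ) + d) := by push_cast; ring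
    rw [e1, e2, zpow_add₀ h2]
    push_cast
    ring

theorem mass_split {ℓ : ℕ} {x : Node} (h : x.length ≤ ℓ) :
    mass (split ℓ x) = wt x - (2 : ℝ) ^ (-(ℓ : ℤ)) := by
  set m := x.length with hm
  set d := ℓ - m with hd
  have : mass (split ℓ x) = ∑ i ∈ Finset.range d, (2 : ℝ) ^ (-((m + i + 1 : ℕ) : ℤ)) := by
    rw [mass, split, List.map_map]
    rw [← hd]
    induction d with
    | zero => simp
    | succ d ih =>
      rw [List.range_succ, Finset.sum_range_succ, ← ih]
      simp [wt]
      omega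
  rw [this]
  have := geom_Ico (m + 1) d
  rw [Finset.sum_Ico_eq_sum_range] at this
  simp only [Nat.add_sub_cancel_left] at this
  have heq : ∀ i ∈ Finset.range d, (2 : ℝ) ^ (-((m + i + 1 : ℕ) : ℤ)) =
      (2 : ℝ) ^ (-(((m + 1) + i : ℕ) : ℤ)) := by
    intro i _; congr 1; push_cast; ring
  rw [Finset.sum_congr rfl heq, this]
  have e1 : (1 : ℤ) - (m + 1 : ℕ) = -(m : ℤ) := by push_cast; ring
  have e2 : -(m : ℤ) - (d : ℤ) = -(ℓ : ℤ) := by omega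
  rw [e1, e2]
  unfold wt
  rw [← hm]

theorem mass_filter_remove : ∀ {L : List Node} {x : Node}, (L.map List.length).Nodup → x ∈ L →
    mass (L.filter (fun y => y.length ≠ x.length)) = mass L - wt x := by
  intro L
  induction L with
  | nil => intro x _ h; simp at h
  | cons a t ih =>
    intro x hnd hx
    have hnd' : (t.map List.length).Nodup := (List.nodup_cons.1 (by simpa using hnd)).2
    have hna : a.length ∉ t.map List.length := (List.nodup_cons.1 (by simpa using hnd)).1
    rcases List.mem_cons.1 hx with rfl | hx
    · have ht : t.filter (fun y => y.length ≠ x.length) = t := by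
        apply List.filter_eq_self.2
        intro y hy
        simp only [ne_eq, decide_eq_true_eq]
        intro hcon
        exact hna (by rw [← hcon]; exact List.mem_map_of_mem hy)
      have hfc : (x :: t).filter (fun y => y.length ≠ x.length)
          = t.filter (fun y => y.length ≠ x.length) := by
        rw [List.filter_cons]; simp
      rw [hfc, ht]
      simp only [mass, List.map_cons, List.sum_cons]
      ring
    · have hax : a.length ≠ x.length := by
        intro hcon
        exact hna (by rw [hcon]; exact List.mem_map_of_mem hx)
      have hfc : (a :: t).filter (fun y => y.length ≠ x.length)
          = a :: t.filter (fun y => y.length ≠ x.length) := by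
        rw [List.filter_cons]; simp [hax]
      rw [hfc]
      have := ih hnd' hx
      simp only [mass, List.map_cons, List.sum_cons] at this ⊢
      rw [this]
      ring

theorem exists_pick_le {ℓ : ℕ} {L : List Node} (hnd : (L.map List.length).Nodup)
    (hm : (2 : ℝ) ^ (-(ℓ : ℤ)) ≤ mass L) : ∃ y ∈ L, y.length ≤ ℓ := by
  by_contra hcon
  push_neg at hcon
  -- all lengths are > ℓ; mass < 2^{-ℓ}
  have hmass : mass L = ∑ j ∈ (L.map List.length).toFinset, (2 : ℝ) ^ (-(j : ℤ)) := by
    rw [List.sum_toFinset _ hnd, mass, List.map_map]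
    rfl
  set s := (L.map List.length).toFinset with hs
  have hmem : ∀ j ∈ s, ℓ + 1 ≤ j := by
    intro j hj
    rw [hs, List.mem_toFinset, List.mem_map] at hj
    obtain ⟨y, hy, rfl⟩ := hj
    exact hcon y hy
  set M := s.sup id with hM
  have hsub : s ⊆ Finset.Ico (ℓ + 1) ((ℓ + 1) + (M + 1)) := by
    intro j hj
    rw [Finset.mem_Ico]
    refine ⟨hmem j hj, ?_⟩
    have : j ≤ M := Finset.le_sup (f := id) hj
    omega
  have hle : ∑ j ∈ s, (2 : ℝ) ^ (-(j : ℤ)) ≤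
      ∑ j ∈ Finset.Ico (ℓ + 1) ((ℓ + 1) + (M + 1)), (2 : ℝ) ^ (-(j : ℤ)) := by
    apply Finset.sum_le_sum_of_subset_of_nonneg hsub
    intro i _ _
    positivity
  rw [geom_Ico] at hle
  have e1 : (1 : ℤ) - ((ℓ : ℕ) + 1 : ℕ) = -(ℓ : ℤ) := by push_cast; ring
  rw [e1] at hle
  have hpos : (0 : ℝ) < 2 ^ (-(ℓ : ℤ) - ((M + 1 : ℕ) : ℤ)) := zpow_pos two_pos _
  rw [hmass] at hm
  linarith


/-! ### the invariant -/

/-- The invariant maintained by the algorithm: `L` is the free list, `A` the list of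
allocated code words. -/
structure Inv (L A : List Node) : Prop where
  nd : (L.map List.length).Nodup
  pw : L.Pairwise Incomp
  cross : ∀ a ∈ A, ∀ y ∈ L, Incomp a y
  pwA : A.Pairwise Incomp

theorem inv_init : Inv [[]] [] where
  nd := by simp
  pw := by simp
  cross := by simp
  pwA := by simp

theorem step {L A : List Node} {ℓ : ℕ} (h : Inv L A)
    (hm : (2 : ℝ) ^ (-(ℓ : ℤ)) ≤ mass L) :
    Inv (nextFree ℓ L) (A ++ [ext ℓ (pick ℓ L)]) ∧
      mass (nextFree ℓ L) = mass L - (2 : ℝ) ^ (-(ℓ : ℤ)) := by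
  obtain ⟨hex⟩ : Nonempty (∃ y ∈ L, y.length ≤ ℓ) := ⟨exists_pick_le h.nd hm⟩
  set x := pick ℓ L with hx
  have hxL : x ∈ L := pick_mem hex
  have hxl : x.length ≤ ℓ := pick_length_le ℓ L
  have hmax : ∀ y ∈ L, y.length ≤ ℓ → y.length ≤ x.length := fun y hy hyl => pick_max hy hyl
  set w := ext ℓ x with hw
  have hxw : x <+: w := prefix_ext ℓ x
  -- facts about the filtered list
  set Lf := L.filter (fun y => y.length ≠ x.length) with hLf
  have hLfsub : List.Sublist Lf L := List.filter_sublist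
  have hLfmem : ∀ y ∈ Lf, y ∈ L ∧ y.length ≠ x.length := by
    intro y hy
    have := List.mem_filter.1 hy
    exact ⟨this.1, by simpa using this.2⟩
  have hLf_incomp_x : ∀ y ∈ Lf, Incomp y x := by
    intro y hy
    obtain ⟨hyL, hyne⟩ := hLfmem y hy
    have : Std.Symm Incomp := ⟨incomp_symmetric⟩
    exact h.pw.forall hyL hxL (fun hc => hyne (by rw [hc]))
  -- elements of the filtered list are incomparable with anything extending x
  have hLf_incomp_pref : ∀ y ∈ Lf, ∀ z, x <+: z → Incomp y z := by
    intro y hy z hz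
    exact (hLf_incomp_x y hy).of_prefix hz
  -- lengths of split elements are not lengths of filtered elements
  have hlen_split : ∀ z ∈ split ℓ x, x.length < z.length ∧ z.length ≤ ℓ := by
    intro z hz
    obtain ⟨i, hi, hzl⟩ := length_of_mem_split hz
    omega
  constructor
  · constructor
    · -- nodup lengths
      rw [nextFree, ← hx, ← hLf, List.map_append]
      apply List.Nodup.append
      · exact h.nd.sublist (hLfsub.map _)
      · -- lengths of split are distinct
        rw [split]
        rw [List.map_map]
        have : (List.length ∘ fun i => x ++ (List.replicate i false ++ [true]))
            = fun i => x.length + i + 1 := by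
          funext i; simp; omega
        rw [this]
        exact List.nodup_range.map (fun a b hab => by omega)
      · -- disjoint
        intro n hn hn'
        obtain ⟨y, hy, rfl⟩ := List.mem_map.1 hn
        obtain ⟨z, hz, hzy⟩ := List.mem_map.1 hn'
        obtain ⟨hyL, hyne⟩ := hLfmem y hy
        obtain ⟨h1, h2⟩ := hlen_split z hz
        have := hmax y hyL (by omega)
        omega
    · -- pairwise incomparable
      rw [nextFree, ← hx, ← hLf]
      rw [List.pairwise_append]
      refine ⟨h.pw.sublist hLfsub, ?_, ?_⟩
      · -- pairwise within split
        have hnd : (split ℓ x).Nodup := by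
          rw [split]
          exact List.nodup_range.map (fun a b hab => by
            have := congrArg List.length hab
            simp at this; omega)
        exact hnd.pairwise_of_forall_ne (fun a ha b hb hab => incomp_split_split ha hb hab)
      · intro y hy z hz
        exact hLf_incomp_pref y hy z (prefix_of_mem_split hz)
    · -- cross: allocated vs free
      intro a ha y hy
      rw [nextFree, ← hx, ← hLf] at hy
      rcases List.mem_append.1 hy with hy | hy
      · rcases List.mem_append.1 ha with ha | ha
        · exact h.cross a ha y (hLfmem y hy).1
        · rw [List.mem_singleton.1 ha]
          exact ((hLf_incomp_x y hy).of_prefix hxw).symm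
      · have hxz : x <+: y := prefix_of_mem_split hy
        rcases List.mem_append.1 ha with ha | ha
        · exact (h.cross a ha x hxL).of_prefix hxz
        · rw [List.mem_singleton.1 ha]
          exact (incomp_ext_split hxl hy)
    · -- pairwise among allocated
      rw [List.pairwise_append]
      refine ⟨h.pwA, by simp, ?_⟩
      intro a ha w' hw'
      rw [List.mem_singleton.1 hw']
      exact (h.cross a ha x hxL).of_prefix hxw
  · -- mass
    rw [nextFree, ← hx, ← hLf, mass_append, mass_filter_remove h.nd hxL, mass_split hxl]
    ring


/-! ### the main induction -/

theorem length_G (f : ℕ → ℕ) (n : ℕ) : (G f n).length = f n :=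
  length_ext (pick_length_le _ _)

theorem main_inv (f : ℕ → ℕ)
    (hsum : ∀ s : Finset ℕ, ∑ n ∈ s, (2 : ℝ) ^ (-(f n : ℤ)) ≤ 1) (n : ℕ) :
    Inv (S f n) ((List.range n).map (G f)) ∧
      mass (S f n) = 1 - ∑ k ∈ Finset.range n, (2 : ℝ) ^ (-(f k : ℤ)) := by
  induction n with
  | zero => exact ⟨inv_init, by simp [S, mass, wt]⟩
  | succ n ih =>
    obtain ⟨hinv, hmass⟩ := ih
    have hm : (2 : ℝ) ^ (-(f n : ℤ)) ≤ mass (S f n) := by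
      rw [hmass]
      have := hsum (Finset.range (n + 1))
      rw [Finset.sum_range_succ] at this
      linarith
    obtain ⟨hinv', hmass'⟩ := step hinv hm
    refine ⟨?_, ?_⟩
    · rw [show S f (n + 1) = nextFree (f n) (S f n) from rfl,
        List.range_succ, List.map_append]
      exact hinv'
    · rw [show S f (n + 1) = nextFree (f n) (S f n) from rfl, hmass', hmass,
        Finset.sum_range_succ]
      ring

theorem incomp_G (f : ℕ → ℕ)
    (hsum : ∀ s : Finset ℕ, ∑ n ∈ s, (2 : ℝ) ^ (-(f n : ℤ)) ≤ 1) {k m : ℕ} (h : k ≠ m) :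
    Incomp (G f k) (G f m) := by
  set n := max k m + 1 with hn
  have hinv := (main_inv f hsum n).1
  have hpw' := List.pairwise_map.1 hinv.pwA
  have : Std.Symm (fun a b => Incomp (G f a) (G f b)) :=
    ⟨fun a b (hab : Incomp (G f a) (G f b)) => hab.symm⟩
  have hforall := hpw'.forall
  exact hforall (List.mem_range.2 (by omega)) (List.mem_range.2 (by omega)) h

theorem G_injective (f : ℕ → ℕ)
    (hsum : ∀ s : Finset ℕ, ∑ n ∈ s, (2 : ℝ) ^ (-(f n : ℤ)) ≤ 1) :
    Function.Injective (G f) := by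
  intro k m hkm
  by_contra h
  exact (incomp_G f hsum h).1 (hkm ▸ List.prefix_refl _)

theorem G_prefixFree (f : ℕ → ℕ)
    (hsum : ∀ s : Finset ℕ, ∑ n ∈ s, (2 : ℝ) ^ (-(f n : ℤ)) ≤ 1) :
    PrefixFreeSet (Set.range (G f)) := by
  rintro p ⟨k, rfl⟩ q ⟨m, rfl⟩ hpq
  rcases eq_or_ne k m with rfl | h
  · rfl
  · exact absurd hpq (incomp_G f hsum h).1


/-! ### computability -/

section Computability

open Primrec

theorem filterMap_if {β : Type*} (q : β → Prop) [DecidablePred q] (l : List β) :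
    (l.filterMap fun y => if q y then some y else none) = l.filter fun y => decide (q y) := by
  induction l with
  | nil => rfl
  | cons a t ih => by_cases h : q a <;> simp [List.filterMap_cons, h, ih]

theorem primrec_fold1 : Primrec₂ fold1 :=
  (Primrec.ite (Primrec.nat_le.comp (list_length.comp fst) (list_length.comp snd))
    Primrec.snd Primrec.fst).to₂

theorem primrec_replicate : Primrec (fun n => List.replicate n false) :=
  (list_map list_range ((const false).comp fst).to₂).of_eq fun n => by
    induction n with
    | zero => simp
    | succ n ih => rw [List.range_succ]; simp_all [List.replicate_succ']

theorem primrec_filterLe : Primrec₂ (fun (ℓ : ℕ) (L : List Node) =>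
    L.filter fun y => y.length ≤ ℓ) :=
  ((listFilterMap (snd : Primrec fun p : ℕ × List Node => p.2)
    ((Primrec.ite (Primrec.nat_le.comp (list_length.comp snd) (fst.comp fst))
      (option_some.comp snd) (const none)) :
        Primrec fun p : (ℕ × List Node) × Node =>
          if p.2.length ≤ p.1.1 then some p.2 else none).to₂).of_eq fun p =>
    filterMap_if _ _).to₂

theorem primrec_pick : Primrec₂ pick :=
  ((list_foldl (primrec_filterLe.comp fst snd) (const ([] : Node))
    ((primrec_fold1.comp (fst.comp snd) (snd.comp snd)).to₂ :
      Primrec₂ fun (_ : ℕ × List Node) (q : Node × Node) => fold1 q.1 q.2)).of_eq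
    fun p => rfl).to₂

theorem primrec_ext : Primrec₂ ext :=
  (list_append.comp snd
    (primrec_replicate.comp (nat_sub.comp fst (list_length.comp snd)))).to₂

theorem primrec_split : Primrec₂ split :=
  (list_map (list_range.comp (nat_sub.comp fst (list_length.comp snd)))
    ((list_append.comp (snd.comp fst)
      (list_append.comp (primrec_replicate.comp snd) (const [true]))).to₂ :
        Primrec₂ fun (p : ℕ × Node) (i : ℕ) =>
          p.2 ++ (List.replicate i false ++ [true]))).to₂

theorem primrec_nextFree : Primrec₂ nextFree := by
  have hp : Primrec fun p : ℕ × List Node => pick p.1 p.2 := primrec_pick.comp fst snd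
  have hfil : Primrec fun p : ℕ × List Node =>
      p.2.filter fun y => y.length ≠ (pick p.1 p.2).length := by
    refine (listFilterMap (snd : Primrec fun p : ℕ × List Node => p.2) ?_).of_eq
      fun p => filterMap_if _ _
    exact (Primrec.ite
      ((PrimrecRel.comp Primrec.eq (list_length.comp snd)
        (list_length.comp (hp.comp fst))).not)
      (option_some.comp snd) (const none)).to₂
  exact (list_append.comp hfil (primrec_split.comp fst hp)).to₂

theorem computable_S {f : ℕ → ℕ} (hf : Computable f) : Computable (S f) := by
  have h : Computable fun n : ℕ =>
      Nat.rec (motive := fun _ => List Node) [[]]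
        (fun y IH => nextFree (f y) IH) n := by
    refine Computable.nat_rec (h := fun (_ : ℕ) (p : ℕ × List Node) => nextFree (f p.1) p.2)
      Computable.id (Computable.const ([[]] : List Node)) ?_
    exact (primrec_nextFree.to_comp.comp (hf.comp (Computable.fst.comp Computable.snd))
      (Computable.snd.comp Computable.snd)).to₂
  refine h.of_eq fun n => ?_
  induction n with
  | zero => rfl
  | succ n ih => simp only [S]; rw [← ih]

theorem computable_G {f : ℕ → ℕ} (hf : Computable f) : Computable (G f) :=
  primrec_ext.to_comp.comp hf
    (primrec_pick.to_comp.comp hf (computable_S hf))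

end Computability

end KraftChaitin

/-- Kraft–Chaitin theorem. -/
theorem kraft_chaitin (f : ℕ → ℕ) (hf : Computable f)
    (hsum : ∀ s : Finset ℕ, ∑ n ∈ s, (2 : ℝ) ^ (-(f n : ℤ)) ≤ 1) :
    ∃ g : ℕ → List Bool, Computable g ∧ Function.Injective g ∧
      PrefixFreeSet (Set.range g) ∧ ∀ n : ℕ, (g n).length = f n := by
  exact ⟨KraftChaitin.G f, KraftChaitin.computable_G hf, KraftChaitin.G_injective f hsum,
    KraftChaitin.G_prefixFree f hsum, KraftChaitin.length_G f⟩
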